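/- Let P be a connected finite Γ-colored d-complete poset with top tree T. Then T is connected as a subposet (T cannot be written as a disjoint union of two nonempty subposets with no comparabilities between them). -/

import Mathlib

/-!
Common definitions: Dynkin diagram data, Γ-colored posets, and the coloring
properties EC, NA, AC, ICE2, UCB1, LCB1 from the paper, together with
Γ-colored d-complete and Γ-colored minuscule posets, top trees, slant
irreducibility, extensions, lower frontier censuses, and full heaps.
-/

universe u v w

variable {Γ : Type u} {P : Type v}

/-- The integers `θ a b` form a Dynkin diagram datum. -/
def DynkinDatum (θ : Γ → Γ → ℤ) : Prop :=
  (∀ a : Γ, θ a a = 2) ∧ (∀ a b : Γ, a ≠ b → θ a b ≤ 0) ∧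
    (∀ a b : Γ, a ≠ b → (θ a b = 0 ↔ θ b a = 0))

/-- Colors `a` and `b` are adjacent. -/
def AdjColor (θ : Γ → Γ → ℤ) (a b : Γ) : Prop := θ a b < 0

/-- The Dynkin diagram is simply laced. -/
def SimplyLaced (θ : Γ → Γ → ℤ) : Prop :=
  ∀ a b : Γ, a ≠ b → θ a b = 0 ∨ θ a b = -1

/-- All closed intervals are finite. -/
def LocallyFinitePoset (α : Type*) [PartialOrder α] : Prop :=
  ∀ x y : α, (Set.Icc x y).Finite

/-- A poset is connected if it cannot be written as a disjoint union of two nonempty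
subposets with no comparabilities between them. -/
def ConnectedPoset (α : Type*) [PartialOrder α] : Prop :=
  ∀ S : Set α, S.Nonempty → Sᶜ.Nonempty → ∃ x ∈ S, ∃ y ∈ Sᶜ, x ≤ y ∨ y ≤ x

section
variable [PartialOrder P]

/-- (EC) Elements with equal colors are comparable. -/
def ColoredEC (κ : P → Γ) : Prop := ∀ x y : P, κ x = κ y → x ≤ y ∨ y ≤ x

/-- (NA) Neighbors have adjacent colors. -/
def ColoredNA (θ : Γ → Γ → ℤ) (κ : P → Γ) : Prop :=
  ∀ x y : P, x ⋖ y → AdjColor θ (κ x) (κ y)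

/-- (AC) Elements with adjacent colors are comparable. -/
def ColoredAC (θ : Γ → Γ → ℤ) (κ : P → Γ) : Prop :=
  ∀ x y : P, AdjColor θ (κ x) (κ y) → x ≤ y ∨ y ≤ x

/-- (ICE2) Between consecutive elements of a color `a`, the census of colors
adjacent to `a` is two. -/
def ColoredICE2 (θ : Γ → Γ → ℤ) (κ : P → Γ) : Prop :=
  ∀ (a : Γ) (x y : P), κ x = a → κ y = a → x < y → (∀ z ∈ Set.Ioo x y, κ z ≠ a) →
    (∑ᶠ z ∈ Set.Ioo x y, -θ (κ z) a) = 2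

/-- `U(x,P)`: elements above `x` with color adjacent to that of `x`. -/
def USet (θ : Γ → Γ → ℤ) (κ : P → Γ) (x : P) : Set P :=
  {y : P | x < y ∧ AdjColor θ (κ y) (κ x)}

/-- `L(x,P)`: elements below `x` with color adjacent to that of `x`. -/
def LSet (θ : Γ → Γ → ℤ) (κ : P → Γ) (x : P) : Set P :=
  {y : P | y < x ∧ AdjColor θ (κ y) (κ x)}

/-- (UCB1) Upper frontier census bound. -/
def ColoredUCB1 (θ : Γ → Γ → ℤ) (κ : P → Γ) : Prop :=
  ∀ x : P, (∀ y : P, κ y = κ x → ¬x < y) →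
    (USet θ κ x).Finite ∧ (∑ᶠ y ∈ USet θ κ x, -θ (κ y) (κ x)) ≤ 1

/-- (LCB1) Lower frontier census bound. -/
def ColoredLCB1 (θ : Γ → Γ → ℤ) (κ : P → Γ) : Prop :=
  ∀ x : P, (∀ y : P, κ y = κ x → ¬y < x) →
    (LSet θ κ x).Finite ∧ (∑ᶠ y ∈ LSet θ κ x, -θ (κ y) (κ x)) ≤ 1

/-- A Γ-colored d-complete poset: locally finite, surjectively colored, and
satisfying EC, NA, AC, ICE2, and UCB1. -/
def GColoredDComplete (θ : Γ → Γ → ℤ) (κ : P → Γ) : Prop :=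
  LocallyFinitePoset P ∧ Function.Surjective κ ∧ ColoredEC κ ∧ ColoredNA θ κ ∧
    ColoredAC θ κ ∧ ColoredICE2 θ κ ∧ ColoredUCB1 θ κ

/-- A Γ-colored minuscule poset: Γ-colored d-complete and LCB1. -/
def GColoredMinuscule (θ : Γ → Γ → ℤ) (κ : P → Γ) : Prop :=
  GColoredDComplete θ κ ∧ ColoredLCB1 θ κ

/-- The top tree: the set of elements maximal in their color class. -/
def TopTree (κ : P → Γ) : Set P := {x : P | ∀ y : P, κ y = κ x → ¬x < y}

/-- `x` is covered by `y` within the subposet `S`. -/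
def CoversIn (S : Set P) (x y : P) : Prop :=
  x ∈ S ∧ y ∈ S ∧ x < y ∧ ∀ z ∈ S, x < z → ¬z < y

/-- Slant irreducibility of a Γ-colored d-complete poset. -/
def SlantIrreducible (κ : P → Γ) : Prop :=
  ConnectedPoset P ∧ ∀ x y : P, CoversIn (TopTree κ) x y → ∃ z : P, z ≠ y ∧ κ z = κ y

/-- A saturated chain in a subposet `S`: a chain that is convex in `S`. -/
def SaturatedChainIn (S C : Set P) : Prop :=
  C ⊆ S ∧ IsChain (· ≤ ·) C ∧ ∀ x ∈ C, ∀ y ∈ C, ∀ z ∈ S, x < z → z < y → z ∈ C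

/-- The lower frontier census at the element `y`. -/
noncomputable def LCensus (θ : Γ → Γ → ℤ) (κ : P → Γ) (y : P) : ℤ :=
  ∑ᶠ x ∈ LSet θ κ y, -θ (κ x) (κ y)

/-- A full heap: locally finite, surjectively colored, EC, NA, AC, ICE2, and every
color class order-isomorphic to ℤ. -/
def FullHeap (θ : Γ → Γ → ℤ) (κ : P → Γ) : Prop :=
  LocallyFinitePoset P ∧ Function.Surjective κ ∧ ColoredEC κ ∧ ColoredNA θ κ ∧
    ColoredAC θ κ ∧ ColoredICE2 θ κ ∧ ∀ a : Γ, Nonempty ({x : P // κ x = a} ≃o ℤ)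

end

/-- `ι` realizes the colored poset `A` as an order filter of the colored poset `B`. -/
def FilterEmbedding {G : Type*} {A B : Type*} [PartialOrder A] [PartialOrder B]
    (κ : A → G) (κ' : B → G) (ι : A → B) : Prop :=
  (∀ p q : A, ι p ≤ ι q ↔ p ≤ q) ∧ (∀ p : A, κ' (ι p) = κ p) ∧ IsUpperSet (Set.range ι)

/-- `B` is an extension of `A` by the color `a`, with extending element `x`. -/
def IsExtensionBy {G : Type*} {A B : Type*} [PartialOrder A] [PartialOrder B]
    (θ : G → G → ℤ) (κ : A → G) (κ' : B → G) (a : G) (ι : A → B) (x : B) : Prop :=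
  Finite B ∧ GColoredDComplete θ κ' ∧ ConnectedPoset B ∧
    FilterEmbedding κ κ' ι ∧ (Set.range ι)ᶜ = {x} ∧ κ' x = a

/-- The top tree of a connected finite Γ-colored d-complete poset is
connected as a subposet. -/
theorem topTree_connected [Fintype Γ] [PartialOrder P] [Fintype P] [Nonempty P]
    (θ : Γ → Γ → ℤ) (κ : P → Γ) (hθ : DynkinDatum θ)
    (hdc : GColoredDComplete θ κ) (hconn : ConnectedPoset P) :
    ConnectedPoset ↥(TopTree κ) := by
  classical
  obtain ⟨-, -, hEC, hNA, hAC, -, -⟩ := hdc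
  classical
  intro S hS hSc
  by_contra hcon
  push_neg at hcon
  -- every x has a top element of its color class
  have htop : ∀ x : P, ∃ z : P, κ z = κ x ∧ x ≤ z ∧ z ∈ TopTree κ := by
    intro x
    obtain ⟨m, hm, hmax⟩ : ∃ m ∈ Finset.univ.filter (fun y => κ y = κ x),
        ∀ y ∈ Finset.univ.filter (fun y => κ y = κ x), ¬m < y := by
      obtain ⟨m, hm⟩ := Finset.exists_maximal (s := Finset.univ.filter (fun y => κ y = κ x))
        ⟨x, by simp⟩
      exact ⟨m, hm.prop, fun y hy hlt => hlt.not_ge (hm.le_of_ge hy hlt.le)⟩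
    simp only [Finset.mem_filter, Finset.mem_univ, true_and] at hm
    refine ⟨m, hm, ?_, ?_⟩
    · rcases hEC x m hm.symm with h | h
      · exact h
      · rcases eq_or_lt_of_le h with h' | h'
        · exact h'.ge
        · exact absurd h' (by have := hmax x (by simp); exact this)
    · intro y hy hlt
      exact hmax y (by simp [hy, hm]) hlt
  choose t ht1 ht2 ht3 using htop
  -- t is determined up to the color class: tops of same color are equal
  have htuniq : ∀ x y : P, κ x = κ y → t x = t y := by
    intro x y hxy
    have hc : κ (t x) = κ (t y) := by rw [ht1, ht1, hxy]
    rcases hEC (t x) (t y) hc with h | h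
    · rcases eq_or_lt_of_le h with h' | h'
      · exact h'
      · exact absurd h' (ht3 x (t y) hc.symm)
    · rcases eq_or_lt_of_le h with h' | h'
      · exact h'.symm
      · exact absurd h' (ht3 y (t x) hc)
  have htfix : ∀ x : P, x ∈ TopTree κ → t x = x := by
    intro x hx
    rcases eq_or_lt_of_le (ht2 x) with h | h
    · exact h.symm
    · exact absurd h (hx (t x) (ht1 x))
  -- key: covers stay in the same part
  have hkey : ∀ x y : P, x ⋖ y → ((t x ∈ Subtype.val '' S) ↔ (t y ∈ Subtype.val '' S)) := by
    intro x y hxy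
    by_cases hc : κ x = κ y
    · rw [htuniq x y hc]
    · have hadj := hNA x y hxy
      have hadj' : AdjColor θ (κ (t x)) (κ (t y)) := by rw [ht1, ht1]; exact hadj
      have hcomp := hAC _ _ hadj'
      have same : ∀ u v : P, (hu : u ∈ TopTree κ) → (hv : v ∈ TopTree κ) →
          u ≤ v ∨ v ≤ u → u ∈ Subtype.val '' S → v ∈ Subtype.val '' S := by
        intro u v hu hv hle huS
        by_contra hvS
        obtain ⟨⟨u', hu'⟩, hu'S, hu'eq⟩ := huS
        have hvc : (⟨v, hv⟩ : ↥(TopTree κ)) ∈ Sᶜ := by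
          intro hmem
          exact hvS ⟨⟨v, hv⟩, hmem, rfl⟩
        have := hcon ⟨u', hu'⟩ hu'S ⟨v, hv⟩ hvc
        subst hu'eq
        rcases hle with h | h
        · exact this.1 h
        · exact this.2 h
      constructor
      · exact same _ _ (ht3 x) (ht3 y) hcomp
      · exact same _ _ (ht3 y) (ht3 x) hcomp.symm
  have hle : ∀ x y : P, x ≤ y → ((t x ∈ Subtype.val '' S) ↔ (t y ∈ Subtype.val '' S)) := by
    intro x y hxy
    letI : LocallyFiniteOrder P := Fintype.toLocallyFiniteOrder
    have h := le_iff_reflTransGen_covBy.mp hxy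
    clear hxy
    induction h with
    | refl => rfl
    | tail _ hcov ih => exact ih.trans (hkey _ _ hcov)
  -- apply connectedness of P
  obtain ⟨⟨s, hsT⟩, hsS⟩ := hS
  obtain ⟨⟨c, hcT⟩, hcS⟩ := hSc
  have hSp : ({x : P | t x ∈ Subtype.val '' S}).Nonempty :=
    ⟨s, by rw [Set.mem_setOf_eq, htfix s hsT]; exact ⟨⟨s, hsT⟩, hsS, rfl⟩⟩
  have hSpc : ({x : P | t x ∈ Subtype.val '' S}ᶜ).Nonempty := by
    refine ⟨c, ?_⟩
    rw [Set.mem_compl_iff, Set.mem_setOf_eq, htfix c hcT]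
    rintro ⟨⟨c', hc'⟩, hc'S, hc'eq⟩
    simp only at hc'eq
    subst hc'eq
    exact hcS hc'S
  obtain ⟨x, hx, y, hy, hxy⟩ := hconn _ hSp hSpc
  rcases hxy with h | h
  · exact hy ((hle x y h).mp hx)
  · exact hy ((hle y x h).mpr hx)
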